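/- For all r ∈ ℝ and n ≥ 1, one has (φ_n'(r))^2 ≤ 4p·φ_n''(r)·φ_n(r). -/

import Mathlib

noncomputable def phi (p : ℝ) (n : ℕ) (r : ℝ) : ℝ :=
  if |r| < n then |r| ^ p
  else (n : ℝ) ^ (p - 2) * (p * (p - 1) / 2) * (|r| - n) ^ 2
      + p * (n : ℝ) ^ (p - 1) * (|r| - n) + (n : ℝ) ^ p

noncomputable def psi (p : ℝ) (n : ℕ) (r : ℝ) : ℝ :=
  if |r| < n then p * r * |r| ^ (p - 2)
  else Real.sign r * ((n : ℝ) ^ (p - 2) * (p * (p - 1)) * (|r| - n) + p * (n : ℝ) ^ (p - 1))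

lemma phi_even (p : ℝ) (n : ℕ) (r : ℝ) : phi p n (-r) = phi p n r := by
  simp [phi, abs_neg]

lemma psi_neg (p : ℝ) (n : ℕ) (r : ℝ) : psi p n (-r) = -psi p n r := by
  simp only [psi, abs_neg, Real.sign_neg]
  split_ifs with h
  · ring
  · ring

lemma phi_eq_of_le {p : ℝ} {n : ℕ} {r : ℝ} (h : |r| ≤ (n : ℝ)) : phi p n r = |r| ^ p := by
  rcases lt_or_eq_of_le h with h' | h'
  · rw [phi, if_pos h']
  · rw [phi, if_neg (by rw [h']; exact lt_irrefl _), h']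
    ring

lemma phi_eq_of_ge {p : ℝ} {n : ℕ} {r : ℝ} (h : (n : ℝ) ≤ |r|) :
    phi p n r = (n : ℝ) ^ (p - 2) * (p * (p - 1) / 2) * (|r| - n) ^ 2
      + p * (n : ℝ) ^ (p - 1) * (|r| - n) + (n : ℝ) ^ p := by
  rw [phi, if_neg (not_lt.2 h)]

lemma quad_deriv (A B C a : ℝ) (x : ℝ) :
    HasDerivAt (fun y : ℝ => A * (y - a) ^ 2 + B * (y - a) + C) (2 * A * (x - a) + B) x := by
  have h1 : HasDerivAt (fun y : ℝ => y - a) 1 x := (hasDerivAt_id x).sub_const a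
  have h2 := h1.pow 2
  have h3 := ((h2.const_mul A).add (h1.const_mul B)).add_const C
  refine h3.congr_deriv ?_
  simp; ring

lemma habs_rpow (p : ℝ) (hp : 2 ≤ p) (x : ℝ) :
    HasDerivAt (fun x : ℝ => |x| ^ p) (p * x * |x| ^ (p - 2)) x := by
  have h1 : HasDerivAt (fun y : ℝ => y ^ (p / 2)) ((p / 2) * (x ^ 2) ^ (p / 2 - 1)) (x ^ 2) :=
    Real.hasDerivAt_rpow_const (Or.inr (by linarith))
  have h2 : HasDerivAt (fun x : ℝ => x ^ 2) (2 * x) x := by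
    simpa using hasDerivAt_pow 2 x
  have h3 := HasDerivAt.comp (h₂ := fun y : ℝ => y ^ (p / 2)) (h := fun x : ℝ => x ^ 2) x h1 h2
  have key : ∀ y q : ℝ, ((y : ℝ) ^ 2) ^ q = |y| ^ (2 * q) := by
    intro y q
    rw [← sq_abs, ← Real.rpow_natCast |y| 2, ← Real.rpow_mul (abs_nonneg y)]
    norm_num
  have hf : ((fun y : ℝ => y ^ (p / 2)) ∘ fun x : ℝ => x ^ 2) = fun x : ℝ => |x| ^ p := by
    funext y
    simp only [Function.comp_apply]
    rw [key y (p / 2)]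
    congr 1; ring
  rw [hf] at h3
  have hv : (p / 2) * (x ^ 2) ^ (p / 2 - 1) * (2 * x) = p * x * |x| ^ (p - 2) := by
    rw [key x (p / 2 - 1)]
    have h : 2 * (p / 2 - 1) = p - 2 := by ring
    rw [h]; ring
  rwa [hv] at h3

lemma hasDerivAt_phi (p : ℝ) (hp : 2 ≤ p) (n : ℕ) (hn : 1 ≤ n) (r : ℝ) :
    HasDerivAt (phi p n) (psi p n r) r := by
  have ha : (1 : ℝ) ≤ (n : ℝ) := by exact_mod_cast hn
  have ha0 : (0 : ℝ) < (n : ℝ) := by linarith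
  suffices H : ∀ x : ℝ, 0 ≤ x → HasDerivAt (phi p n) (psi p n x) x by
    rcases le_or_gt 0 r with hr | hr
    · exact H r hr
    · have h := HasDerivAt.comp (h₂ := phi p n) (h := fun y : ℝ => -y) r
        (by simpa using H (-r) (by linarith)) (hasDerivAt_neg r)
      have he : (phi p n ∘ fun y : ℝ => -y) = phi p n := funext fun x => phi_even p n x
      rw [he] at h
      have : psi p n (-r) * (-1) = psi p n r := by rw [psi_neg]; ring
      rwa [this] at h
  intro x hx
  have hax : |x| = x := abs_of_nonneg hx
  rcases lt_trichotomy x (n : ℝ) with hlt | heq | hgt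
  · -- |x| < n : phi = |·|^p near x
    have hev : phi p n =ᶠ[nhds x] fun y => |y| ^ p := by
      filter_upwards [Ioo_mem_nhds (by linarith : -(n : ℝ) < x) hlt] with y hy
      exact phi_eq_of_le (le_of_lt (abs_lt.2 ⟨hy.1, hy.2⟩))
    have h := (habs_rpow p hp x).congr_of_eventuallyEq hev
    have : psi p n x = p * x * |x| ^ (p - 2) := by
      rw [psi, if_pos (by rwa [hax])]
    rwa [this]
  · -- boundary x = n
    rw [heq]
    have hBval : psi p n (n : ℝ) = p * (n : ℝ) ^ (p - 1) := by
      rw [psi, if_neg (by rw [abs_of_pos ha0]; exact lt_irrefl _), abs_of_pos ha0,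
        Real.sign_of_pos ha0]
      ring
    rw [hBval]
    have hIci : HasDerivWithinAt (phi p n) (p * (n : ℝ) ^ (p - 1)) (Set.Ici (n : ℝ)) (n : ℝ) := by
      have hq := (quad_deriv ((n : ℝ) ^ (p - 2) * (p * (p - 1) / 2)) (p * (n : ℝ) ^ (p - 1))
        ((n : ℝ) ^ p) (n : ℝ) (n : ℝ))
      have hq' : HasDerivWithinAt
          (fun y : ℝ => (n : ℝ) ^ (p - 2) * (p * (p - 1) / 2) * (y - n) ^ 2
            + p * (n : ℝ) ^ (p - 1) * (y - n) + (n : ℝ) ^ p)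
          (p * (n : ℝ) ^ (p - 1)) (Set.Ici (n : ℝ)) (n : ℝ) := by
        refine hq.hasDerivWithinAt.congr_deriv ?_
        ring
      refine hq'.congr (fun y hy => ?_) ?_
      · have hy0 : (0 : ℝ) < y := lt_of_lt_of_le ha0 hy
        rw [phi_eq_of_ge (by rwa [abs_of_pos hy0]), abs_of_pos hy0]
      · rw [phi_eq_of_ge (by rw [abs_of_pos ha0]), abs_of_pos ha0]
    have hIic : HasDerivWithinAt (phi p n) (p * (n : ℝ) ^ (p - 1)) (Set.Iic (n : ℝ)) (n : ℝ) := by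
      have h := (habs_rpow p hp (n : ℝ)).hasDerivWithinAt (s := Set.Iic (n : ℝ))
      have hval : p * (n : ℝ) * |(n : ℝ)| ^ (p - 2) = p * (n : ℝ) ^ (p - 1) := by
        rw [abs_of_pos ha0]
        have : (p : ℝ) - 1 = 1 + (p - 2) := by ring
        rw [this, Real.rpow_add ha0, Real.rpow_one]
        ring
      rw [hval] at h
      refine h.congr_of_eventuallyEq ?_ ?_
      · filter_upwards [mem_nhdsWithin_of_mem_nhds (Ioi_mem_nhds (by linarith : -(n : ℝ) < n)),
          self_mem_nhdsWithin] with y hy1 hy2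
        exact phi_eq_of_le (abs_le.2 ⟨le_of_lt hy1, hy2⟩)
      · exact phi_eq_of_le (by rw [abs_of_pos ha0])
    have h := hIic.union hIci
    rw [Set.Iic_union_Ici] at h
    exact hasDerivWithinAt_univ.mp h
  · -- x > n
    have hev : phi p n =ᶠ[nhds x] fun y => (n : ℝ) ^ (p - 2) * (p * (p - 1) / 2) * (y - n) ^ 2
        + p * (n : ℝ) ^ (p - 1) * (y - n) + (n : ℝ) ^ p := by
      filter_upwards [Ioi_mem_nhds hgt] with y hy
      have hy0 : (0 : ℝ) < y := lt_trans ha0 hy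
      rw [phi_eq_of_ge (by rw [abs_of_pos hy0]; exact le_of_lt hy), abs_of_pos hy0]
    have h := (quad_deriv ((n : ℝ) ^ (p - 2) * (p * (p - 1) / 2)) (p * (n : ℝ) ^ (p - 1))
      ((n : ℝ) ^ p) (n : ℝ) x).congr_of_eventuallyEq hev
    have hx0 : (0 : ℝ) < x := lt_trans ha0 hgt
    have : psi p n x = 2 * ((n : ℝ) ^ (p - 2) * (p * (p - 1) / 2)) * (x - n)
        + p * (n : ℝ) ^ (p - 1) := by
      rw [psi, if_neg (by rw [hax]; exact not_lt.2 (le_of_lt hgt)), hax,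
        Real.sign_of_pos hx0]
      ring
    rwa [this]

lemma inner_deriv (p : ℝ) (hp : 2 ≤ p) {x : ℝ} (hx : 0 < x) :
    HasDerivAt (fun y : ℝ => p * (y * y ^ (p - 2))) (p * (p - 1) * x ^ (p - 2)) x := by
  have h1 : HasDerivAt (fun y : ℝ => y ^ (p - 2)) ((p - 2) * x ^ (p - 2 - 1)) x :=
    Real.hasDerivAt_rpow_const (Or.inl (ne_of_gt hx))
  have h2 := ((hasDerivAt_id x).mul h1).const_mul p
  refine h2.congr_deriv ?_
  have hxx : x * x ^ (p - 2 - 1) = x ^ (p - 2) := by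
    have e : (1 : ℝ) + (p - 2 - 1) = p - 2 := by ring
    calc x * x ^ (p - 2 - 1) = x ^ (1 : ℝ) * x ^ (p - 2 - 1) := by rw [Real.rpow_one]
      _ = x ^ (1 + (p - 2 - 1)) := (Real.rpow_add hx _ _).symm
      _ = x ^ (p - 2) := by rw [e]
  simp only [id]
  rw [← hxx]
  ring

lemma hasDerivAt_psi (p : ℝ) (hp : 2 ≤ p) (n : ℕ) (hn : 1 ≤ n) (r : ℝ) (hr : r ≠ 0) :
    HasDerivAt (psi p n) (p * (p - 1) * (min |r| (n : ℝ)) ^ (p - 2)) r := by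
  have ha : (1 : ℝ) ≤ (n : ℝ) := by exact_mod_cast hn
  have ha0 : (0 : ℝ) < (n : ℝ) := by linarith
  suffices H : ∀ x : ℝ, 0 < x →
      HasDerivAt (psi p n) (p * (p - 1) * (min |x| (n : ℝ)) ^ (p - 2)) x by
    rcases lt_trichotomy 0 r with hr' | hr' | hr'
    · exact H r hr'
    · exact absurd hr'.symm hr
    · have h := HasDerivAt.comp (h₂ := psi p n) (h := fun y : ℝ => -y) r
        (by simpa using H (-r) (by linarith)) (hasDerivAt_neg r)
      have he : (psi p n ∘ fun y : ℝ => -y) = fun y => -psi p n y :=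
        funext fun x => psi_neg p n x
      rw [he] at h
      have h2 := h.neg
      simp only [neg_neg, Pi.neg_def] at h2
      refine h2.congr_deriv ?_
      ring
  intro x hx
  have hax : |x| = x := abs_of_pos hx
  rcases lt_trichotomy x (n : ℝ) with hlt | heq | hgt
  · -- 0 < x < n
    have hev : psi p n =ᶠ[nhds x] fun y => p * (y * y ^ (p - 2)) := by
      filter_upwards [Ioo_mem_nhds hx hlt] with y hy
      rw [psi, if_pos (by rw [abs_of_pos hy.1]; exact hy.2), abs_of_pos hy.1]
      ring
    have h := (inner_deriv p hp hx).congr_of_eventuallyEq hev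
    rwa [hax, min_eq_left (le_of_lt hlt)]
  · -- boundary
    rw [heq, abs_of_pos ha0, min_self]
    have hIci : HasDerivWithinAt (psi p n) (p * (p - 1) * (n : ℝ) ^ (p - 2))
        (Set.Ici (n : ℝ)) (n : ℝ) := by
      have hq : HasDerivAt (fun y : ℝ => (n : ℝ) ^ (p - 2) * (p * (p - 1)) * (y - n)
          + p * (n : ℝ) ^ (p - 1)) ((n : ℝ) ^ (p - 2) * (p * (p - 1))) (n : ℝ) := by
        have h1 : HasDerivAt (fun y : ℝ => y - (n : ℝ)) 1 (n : ℝ) :=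
          (hasDerivAt_id _).sub_const _
        have h2 := (h1.const_mul ((n : ℝ) ^ (p - 2) * (p * (p - 1)))).add_const
          (p * (n : ℝ) ^ (p - 1))
        refine h2.congr_deriv ?_
        ring
      have hq' : HasDerivWithinAt (fun y : ℝ => (n : ℝ) ^ (p - 2) * (p * (p - 1)) * (y - n)
          + p * (n : ℝ) ^ (p - 1)) (p * (p - 1) * (n : ℝ) ^ (p - 2)) (Set.Ici (n : ℝ)) (n : ℝ) := by
        refine hq.hasDerivWithinAt.congr_deriv ?_
        ring
      refine hq'.congr (fun y hy => ?_) ?_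
      · have hy0 : (0 : ℝ) < y := lt_of_lt_of_le ha0 hy
        rw [psi, if_neg (by rw [abs_of_pos hy0]; exact not_lt.2 hy), abs_of_pos hy0,
          Real.sign_of_pos hy0]
        ring
      · rw [psi, if_neg (by rw [abs_of_pos ha0]; exact lt_irrefl _), abs_of_pos ha0,
          Real.sign_of_pos ha0]
        ring
    have hIic : HasDerivWithinAt (psi p n) (p * (p - 1) * (n : ℝ) ^ (p - 2))
        (Set.Iic (n : ℝ)) (n : ℝ) := by
      have h := (inner_deriv p hp ha0).hasDerivWithinAt (s := Set.Iic (n : ℝ))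
      refine h.congr_of_eventuallyEq ?_ ?_
      · filter_upwards [mem_nhdsWithin_of_mem_nhds (Ioi_mem_nhds ha0), self_mem_nhdsWithin]
          with y hy1 hy2
        rcases lt_or_eq_of_le (Set.mem_Iic.mp hy2) with hy2' | hy2'
        · rw [psi, if_pos (by rwa [abs_of_pos hy1]), abs_of_pos hy1]
          ring
        · rw [psi, if_neg (by rw [hy2', abs_of_pos ha0]; exact lt_irrefl _), hy2',
            abs_of_pos ha0, Real.sign_of_pos ha0]
          rw [show p - 1 = 1 + (p - 2) by ring, Real.rpow_add ha0, Real.rpow_one]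
          ring
      · rw [psi, if_neg (by rw [abs_of_pos ha0]; exact lt_irrefl _), abs_of_pos ha0,
          Real.sign_of_pos ha0]
        rw [show p - 1 = 1 + (p - 2) by ring, Real.rpow_add ha0, Real.rpow_one]
        ring
    have h := hIic.union hIci
    rw [Set.Iic_union_Ici] at h
    exact hasDerivWithinAt_univ.mp h
  · -- x > n
    have hev : psi p n =ᶠ[nhds x] fun y => (n : ℝ) ^ (p - 2) * (p * (p - 1)) * (y - n)
        + p * (n : ℝ) ^ (p - 1) := by
      filter_upwards [Ioi_mem_nhds hgt] with y hy
      have hy0 : (0 : ℝ) < y := lt_trans ha0 hy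
      rw [psi, if_neg (by rw [abs_of_pos hy0]; exact not_lt.2 (le_of_lt hy)), abs_of_pos hy0,
        Real.sign_of_pos hy0]
      ring
    have hq : HasDerivAt (fun y : ℝ => (n : ℝ) ^ (p - 2) * (p * (p - 1)) * (y - n)
        + p * (n : ℝ) ^ (p - 1)) ((n : ℝ) ^ (p - 2) * (p * (p - 1))) x := by
      have h1 : HasDerivAt (fun y : ℝ => y - (n : ℝ)) 1 x := (hasDerivAt_id _).sub_const _
      have h2 := (h1.const_mul ((n : ℝ) ^ (p - 2) * (p * (p - 1)))).add_const
        (p * (n : ℝ) ^ (p - 1))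
      refine h2.congr_deriv ?_
      ring
    have h := hq.congr_of_eventuallyEq hev
    rw [hax, min_eq_right (le_of_lt hgt)]
    refine h.congr_deriv ?_
    ring

lemma alg_ineq (p u v w s : ℝ) (hp : 2 ≤ p) (hu : 0 ≤ u) (hv : 0 ≤ v) (hs : 0 ≤ s)
    (huw : u * w = v ^ 2) :
    (u * (p * (p - 1)) * s + p * v) ^ 2
      ≤ 4 * p * (p * (p - 1) * u) * (u * (p * (p - 1) / 2) * s ^ 2 + p * v * s + w) := by
  have hX : (0 : ℝ) ≤ u * s := mul_nonneg hu hs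
  have t1 : (0 : ℝ) ≤ (2 * p - 1) * (p - 1) ^ 2 * (u * s) ^ 2 :=
    mul_nonneg (mul_nonneg (by linarith) (sq_nonneg _)) (sq_nonneg _)
  have t2 : (0 : ℝ) ≤ (4 * p - 2) * (p - 1) * ((u * s) * v) :=
    mul_nonneg (mul_nonneg (by linarith) (by linarith)) (mul_nonneg hX hv)
  have t3 : (0 : ℝ) ≤ (4 * p - 5) * v ^ 2 := mul_nonneg (by linarith) (sq_nonneg _)
  have h4 : 4 * p ^ 2 * (p - 1) * (u * w) = 4 * p ^ 2 * (p - 1) * v ^ 2 := by rw [huw]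
  nlinarith [t1, t2, t3, h4, sq_nonneg p]

theorem stmt4 (p : ℝ) (hp : 2 ≤ p) (n : ℕ) (hn : 1 ≤ n) (r : ℝ) :
    (deriv (phi p n) r) ^ 2 ≤ 4 * p * deriv (deriv (phi p n)) r * phi p n r := by
  have ha : (1 : ℝ) ≤ (n : ℝ) := by exact_mod_cast hn
  have ha0 : (0 : ℝ) < (n : ℝ) := by linarith
  have hderiv : deriv (phi p n) = psi p n :=
    funext fun x => (hasDerivAt_phi p hp n hn x).deriv
  rw [hderiv]
  by_cases hr0 : r = 0
  · subst hr0
    have h0 : phi p n 0 = 0 := by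
      rw [phi_eq_of_le (by rw [abs_zero]; linarith), abs_zero,
        Real.zero_rpow (by linarith : p ≠ 0)]
    have h1 : psi p n 0 = 0 := by
      rw [psi, if_pos (by rw [abs_zero]; linarith)]
      ring
    rw [h0, h1]
    norm_num
  · rw [(hasDerivAt_psi p hp n hn r hr0).deriv]
    rcases lt_or_ge |r| (n : ℝ) with hlt | hge
    · -- |r| < n
      rw [phi_eq_of_le (le_of_lt hlt), min_eq_left (le_of_lt hlt)]
      rw [psi, if_pos hlt]
      have htr : (0 : ℝ) < |r| := abs_pos.2 hr0
      have hsplit : |r| ^ p = |r| ^ (p - 2) * r ^ 2 := by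
        rw [show p = (p - 2) + 2 by ring, Real.rpow_add htr, ← sq_abs r,
          ← Real.rpow_natCast |r| 2]
        norm_num
      rw [hsplit]
      have hs : (0 : ℝ) ≤ |r| ^ (p - 2) := Real.rpow_nonneg (abs_nonneg r) _
      nlinarith [mul_nonneg (mul_nonneg (sq_nonneg p) (sq_nonneg (|r| ^ (p - 2) * r)))
        (show (0 : ℝ) ≤ 4 * p - 5 by linarith)]
    · -- |r| ≥ n
      rw [phi_eq_of_ge hge, min_eq_right hge]
      rw [psi, if_neg (not_lt.2 hge)]
      have hsgn : Real.sign r = 1 ∨ Real.sign r = -1 := by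
        rcases lt_trichotomy r 0 with h | h | h
        · exact Or.inr (Real.sign_of_neg h)
        · exact absurd h hr0
        · exact Or.inl (Real.sign_of_pos h)
      have hsq : (Real.sign r * ((n : ℝ) ^ (p - 2) * (p * (p - 1)) * (|r| - n)
          + p * (n : ℝ) ^ (p - 1))) ^ 2
          = ((n : ℝ) ^ (p - 2) * (p * (p - 1)) * (|r| - n) + p * (n : ℝ) ^ (p - 1)) ^ 2 := by
        rcases hsgn with h | h <;> rw [h] <;> ring
      rw [hsq]
      have huw : (n : ℝ) ^ (p - 2) * (n : ℝ) ^ p = ((n : ℝ) ^ (p - 1)) ^ 2 := by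
        rw [← Real.rpow_add ha0, ← Real.rpow_natCast ((n : ℝ) ^ (p - 1)) 2,
          ← Real.rpow_mul (le_of_lt ha0)]
        norm_num
        congr 1
        ring
      exact alg_ineq p ((n : ℝ) ^ (p - 2)) ((n : ℝ) ^ (p - 1)) ((n : ℝ) ^ p) (|r| - n) hp
        (Real.rpow_nonneg (le_of_lt ha0) _) (Real.rpow_nonneg (le_of_lt ha0) _)
        (by linarith) huw
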